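/- Under hypotheses (i), (ii), (iii), the polytope P_A has exactly n−ℓ extreme points if and only if there exist a permutation σ of the columns {1,…,n} and a matrix M ∈ ℤ^{ℓ×n} whose real kernel equals the real kernel of the column-permuted matrix A∘σ, such that M has the block form [D | C], where D is an ℓ×ℓ diagonal matrix with strictly negative diagonal entries and C is an ℓ×(n−ℓ) matrix all of whose entries are nonnegative. -/

import Mathlib

open Finset

namespace Stmt1Aux

variable {ℓ m n : ℕ}

lemma exists_weights {E : Type*} [AddCommGroup E] [Module ℝ E] {m : ℕ} {V : Fin m → E} {x : E}
    (hx : x ∈ convexHull ℝ (Set.range V)) :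
    ∃ t : Fin m → ℝ, (∀ k, 0 ≤ t k) ∧ ∑ k, t k = 1 ∧ x = ∑ k, t k • V k := by
  rw [convexHull_range_eq_exists_affineCombination] at hx
  obtain ⟨s, w, hw0, hw1, hx⟩ := hx
  rw [Finset.affineCombination_eq_linear_combination _ _ _ hw1] at hx
  refine ⟨fun k => if k ∈ s then w k else 0, fun k => ?_, ?_, ?_⟩
  · dsimp only; split_ifs with h
    · exact hw0 k h
    · exact le_rfl
  · rw [Finset.sum_ite_mem, Finset.univ_inter]; exact hw1
  · rw [← hx]
    rw [show (∑ k : Fin m, (if k ∈ s then w k else 0) • V k) = ∑ k ∈ s, w k • V k from ?_]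
    refine (Finset.sum_subset (Finset.subset_univ s) ?_).symm.trans
      (Finset.sum_congr rfl fun k hk => by rw [if_pos hk])
    intro k _ hk; rw [if_neg hk, zero_smul]

/-- The core structural lemma: if `V : Fin m → ℝⁿ` lands in `L ∩ stdSimplex`, has a
"diagonal support" system `J`, and `L ∩ stdSimplex ⊆ hull (range V)`, then the extreme
points of `L ∩ stdSimplex` are exactly `range V`, of cardinality `m`. -/
lemma core {n m : ℕ} (L : Submodule ℝ (Fin n → ℝ)) (V : Fin m → (Fin n → ℝ)) (J : Fin m → Fin n)
    (hV : ∀ k, V k ∈ L) (hVs : ∀ k, V k ∈ stdSimplex ℝ (Fin n))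
    (hJpos : ∀ k, 0 < V k (J k)) (hJzero : ∀ k k', k ≠ k' → V k (J k') = 0)
    (hhull : (L : Set (Fin n → ℝ)) ∩ stdSimplex ℝ (Fin n) ⊆ convexHull ℝ (Set.range V)) :
    (Set.extremePoints ℝ ((L : Set (Fin n → ℝ)) ∩ stdSimplex ℝ (Fin n))).ncard = m := by
  set P : Set (Fin n → ℝ) := (L : Set (Fin n → ℝ)) ∩ stdSimplex ℝ (Fin n) with hP
  have hVP : ∀ k, V k ∈ P := fun k => ⟨hV k, hVs k⟩
  have hPhull : P = convexHull ℝ (Set.range V) := by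
    refine Set.Subset.antisymm hhull (convexHull_min ?_ ?_)
    · rintro x ⟨k, rfl⟩; exact hVP k
    · exact (L.convex).inter (convex_stdSimplex ℝ (Fin n))
  -- a member of P with zero coordinates at J k' (k' ≠ k) equals V k
  have key : ∀ k, ∀ y ∈ P, (∀ k', k' ≠ k → y (J k') = 0) → y = V k := by
    intro k y hy hzero
    obtain ⟨t, ht0, ht1, hty⟩ := exists_weights (hPhull ▸ hy)
    have htk : ∀ k', k' ≠ k → t k' = 0 := by
      intro k' hk'
      have h1 : y (J k') = t k' * V k' (J k') := by
        rw [hty]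
        rw [Finset.sum_apply]
        rw [Finset.sum_eq_single k']
        · simp
        · intro b _ hb; simp [hJzero b k' hb]
        · simp
      have := hzero k' hk'
      rw [this] at h1
      have := (hJpos k').ne'
      rcases mul_eq_zero.mp h1.symm with h | h
      · exact h
      · exact absurd h this
    have htk1 : t k = 1 := by
      rw [← ht1, Finset.sum_eq_single k]
      · intro b _ hb; exact htk b hb
      · simp
    rw [hty, Finset.sum_eq_single k]
    · rw [htk1, one_smul]
    · intro b _ hb; rw [htk b hb, zero_smul]
    · simp
  have hEP : Set.extremePoints ℝ P = Set.range V := by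
    apply Set.Subset.antisymm
    · rw [hPhull]; exact extremePoints_convexHull_subset
    · rintro x ⟨k, rfl⟩
      rw [mem_extremePoints]
      refine ⟨hVP k, ?_⟩
      intro x₁ hx₁ x₂ hx₂ hseg
      obtain ⟨a, b, ha, hb, hab, hsum⟩ := hseg
      have hzero : ∀ x' ∈ P, ∀ k', k' ≠ k → (a • x₁ + b • x₂ = V k) →
          True := fun _ _ _ _ _ => trivial
      have h0 : ∀ k', k' ≠ k → x₁ (J k') = 0 ∧ x₂ (J k') = 0 := by
        intro k' hk'
        have hVk : V k (J k') = 0 := hJzero k k' (Ne.symm hk')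
        have hx1n : 0 ≤ x₁ (J k') := hx₁.2.1 _
        have hx2n : 0 ≤ x₂ (J k') := hx₂.2.1 _
        have : a * x₁ (J k') + b * x₂ (J k') = 0 := by
          have := congrFun hsum (J k'); simpa [hVk] using this
        constructor
        · nlinarith [mul_nonneg ha.le hx1n, mul_nonneg hb.le hx2n]
        · nlinarith [mul_nonneg ha.le hx1n, mul_nonneg hb.le hx2n]
      have e1 : x₁ = V k := key k x₁ hx₁ (fun k' hk' => (h0 k' hk').1)
      have e2 : x₂ = V k := key k x₂ hx₂ (fun k' hk' => (h0 k' hk').2)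
      exact ⟨e1, e2⟩
  have hVinj : Function.Injective V := by
    intro k k' h
    by_contra hne
    have h1 : V k (J k) > 0 := hJpos k
    have h2 : V k' (J k) = 0 := hJzero k' k (Ne.symm hne)
    rw [h] at h1; rw [h2] at h1; exact lt_irrefl 0 h1
  rw [hEP]
  rw [← Set.image_univ, Set.ncard_image_of_injective _ hVinj]
  simp [Set.ncard_univ]







/-- The kernel of an integer matrix, as a real submodule. -/
noncomputable def kerSub (B : Matrix (Fin ℓ) (Fin n) ℤ) : Submodule ℝ (Fin n → ℝ) :=
  LinearMap.ker (B.map (Int.cast : ℤ → ℝ)).mulVecLin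

lemma mem_kerSub {B : Matrix (Fin ℓ) (Fin n) ℤ} {x : Fin n → ℝ} :
    x ∈ kerSub B ↔ ∀ i, ∑ j, (B i j : ℝ) * x j = 0 := by
  rw [kerSub, LinearMap.mem_ker, Matrix.mulVecLin_apply]
  constructor
  · intro h i
    have := congrFun h i
    simpa [Matrix.mulVec, dotProduct] using this
  · intro h
    funext i
    simpa [Matrix.mulVec, dotProduct] using h i

lemma kerset_eq (B : Matrix (Fin ℓ) (Fin n) ℤ) :
    {x : Fin n → ℝ | ∀ i, ∑ j, (B i j : ℝ) * x j = 0} = (kerSub B : Set (Fin n → ℝ)) := by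
  ext x; exact (mem_kerSub).symm

lemma isClosed_kerset (B : Matrix (Fin ℓ) (Fin n) ℤ) :
    IsClosed {x : Fin n → ℝ | ∀ i, ∑ j, (B i j : ℝ) * x j = 0} := by
  have : {x : Fin n → ℝ | ∀ i, ∑ j, (B i j : ℝ) * x j = 0}
      = ⋂ i, {x : Fin n → ℝ | ∑ j, (B i j : ℝ) * x j = 0} := by
    ext x; simp [Set.mem_iInter]
  rw [this]
  refine isClosed_iInter fun i => isClosed_eq ?_ continuous_const
  exact continuous_finset_sum _ fun j _ => continuous_const.mul (continuous_apply j)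

lemma finrank_kerSub (A : Matrix (Fin ℓ) (Fin n) ℤ)
    (hii : (A.map (Int.cast : ℤ → ℝ)).rank = ℓ) :
    ℓ + Module.finrank ℝ (kerSub A) = n := by
  have h := LinearMap.finrank_range_add_finrank_ker (A.map (Int.cast : ℤ → ℝ)).mulVecLin
  rw [show Module.finrank ℝ ↥(LinearMap.range (A.map (Int.cast : ℤ → ℝ)).mulVecLin)
      = (A.map (Int.cast : ℤ → ℝ)).rank from rfl, hii] at h
  rw [show kerSub A = LinearMap.ker (A.map (Int.cast : ℤ → ℝ)).mulVecLin from rfl]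
  rw [h]
  simp

/-- `ℓ < n` follows from hypothesis (i) plus full rank. -/
lemma l_lt_n (A : Matrix (Fin ℓ) (Fin n) ℤ) (hℓ : 1 ≤ ℓ) (hn : ℓ ≤ n)
    (hi : ∃ x ∈ ({x : Fin n → ℝ | ∀ i, ∑ j, (A i j : ℝ) * x j = 0} ∩ stdSimplex ℝ (Fin n)),
        ∀ j, 0 < x j)
    (hii : (A.map (Int.cast : ℤ → ℝ)).rank = ℓ) : ℓ < n := by
  obtain ⟨x, ⟨hxk, hxs⟩, hxpos⟩ := hi
  rcases lt_or_eq_of_le hn with h | h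
  · exact h
  exfalso
  have hker : x ∈ kerSub A := mem_kerSub.mpr hxk
  have hfin := finrank_kerSub A hii
  have hfin0 : Module.finrank ℝ (kerSub A) = 0 := by omega
  have hbot : kerSub A = ⊥ := Submodule.finrank_eq_zero.mp hfin0
  have hx0 : x = 0 := by
    have : x ∈ (⊥ : Submodule ℝ (Fin n → ℝ)) := hbot ▸ hker
    simpa [Submodule.mem_bot] using this
  have h1 := hxs.2
  rw [hx0] at h1
  simp at h1







/-- The index equivalence splitting `Fin n` as `Fin ℓ ⊕ Fin m`. -/
def ι (h : ℓ + m = n) : Fin ℓ ⊕ Fin m ≃ Fin n :=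
  finSumFinEquiv.trans (finCongr h)

lemma colL_coe (h : ℓ + m = n) (i : Fin ℓ) : ((ι h (Sum.inl i) : Fin n) : ℕ) = i := by
  simp [ι, finCongr]

lemma colR_coe (h : ℓ + m = n) (k : Fin m) : ((ι h (Sum.inr k) : Fin n) : ℕ) = ℓ + k := by
  simp [ι, finCongr]

lemma sum_split (h : ℓ + m = n) {β : Type*} [AddCommMonoid β] (f : Fin n → β) :
    ∑ j, f j = ∑ i, f (ι h (Sum.inl i)) + ∑ k, f (ι h (Sum.inr k)) := by
  rw [← Equiv.sum_comp (ι h) f, Fintype.sum_sum_type]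

lemma symm_eq_inl (h : ℓ + m = n) (j : Fin n) (hj : (j : ℕ) < ℓ) :
    (ι h).symm j = Sum.inl ⟨j, hj⟩ := by
  rw [Equiv.symm_apply_eq]
  apply Fin.ext
  rw [colL_coe]

lemma symm_eq_inr (h : ℓ + m = n) (j : Fin n) (hj : ℓ ≤ (j : ℕ)) :
    (ι h).symm j = Sum.inr ⟨(j : ℕ) - ℓ, by have := j.2; omega⟩ := by
  have hj2 : (j : ℕ) < n := j.2
  rw [Equiv.symm_apply_eq]
  apply Fin.ext
  rw [colR_coe]
  show (j : ℕ) = ℓ + ((j : ℕ) - ℓ)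
  omega





section Rev
variable {ℓ m n : ℕ}

/-- The `⇐` core: a matrix in block form `[D|C]` has its `P`-polytope with exactly `m`
extreme points. -/
lemma rev_count (h : ℓ + m = n) (M : Matrix (Fin ℓ) (Fin n) ℤ)
    (hD : ∀ (i : Fin ℓ) (j : Fin n), (j : ℕ) < ℓ →
        (((j : ℕ) = (i : ℕ) → M i j < 0) ∧ ((j : ℕ) ≠ (i : ℕ) → M i j = 0)))
    (hC : ∀ (i : Fin ℓ) (j : Fin n), ℓ ≤ (j : ℕ) → 0 ≤ M i j) :
    (Set.extremePoints ℝ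
      ((kerSub M : Set (Fin n → ℝ)) ∩ stdSimplex ℝ (Fin n))).ncard = m := by
  classical
  set cL : Fin ℓ → Fin n := fun i => ι h (Sum.inl i) with hcL
  set cR : Fin m → Fin n := fun k => ι h (Sum.inr k) with hcR
  have hcLlt : ∀ i, ((cL i : Fin n) : ℕ) < ℓ := fun i => by rw [hcL]; rw [colL_coe]; exact i.2
  have hcRge : ∀ k, ℓ ≤ ((cR k : Fin n) : ℕ) := fun k => by
    rw [hcR]; rw [colR_coe]; omega
  have hdiagneg : ∀ i, (M i (cL i) : ℝ) < 0 := by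
    intro i
    have := (hD i (cL i) (hcLlt i)).1 (by rw [hcL, colL_coe])
    exact_mod_cast this
  have hdiagne : ∀ i, (M i (cL i) : ℝ) ≠ 0 := fun i => (hdiagneg i).ne
  have hoff : ∀ i i', i' ≠ i → (M i (cL i') : ℝ) = 0 := by
    intro i i' hne
    have h2 := (hD i (cL i') (hcLlt i')).2 (by
      rw [hcL, colL_coe]
      exact fun hh => hne (Fin.ext hh))
    exact_mod_cast h2
  have hCpos : ∀ i k, 0 ≤ (M i (cR k) : ℝ) := fun i k => by
    exact_mod_cast hC i (cR k) (hcRge k)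
  -- the basic kernel vectors
  set u : Fin m → Fin n → ℝ := fun k j =>
    Sum.elim (fun i => (M i (cR k) : ℝ) / (-(M i (cL i) : ℝ)))
      (fun k' => if k' = k then (1:ℝ) else 0) ((ι h).symm j) with hu
  have hu_cL : ∀ k i, u k (cL i) = (M i (cR k) : ℝ) / (-(M i (cL i) : ℝ)) := by
    intro k i; rw [hu]; simp [hcL]
  have hu_cR : ∀ k k', u k (cR k') = if k' = k then (1:ℝ) else 0 := by
    intro k k'; rw [hu]; simp [hcR]
  have hu_nonneg : ∀ k j, 0 ≤ u k j := by
    intro k j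
    have hrfl : u k j = Sum.elim (fun i => (M i (cR k) : ℝ) / (-(M i (cL i) : ℝ)))
        (fun k' => if k' = k then (1:ℝ) else 0) ((ι h).symm j) := rfl
    rw [hrfl]
    rcases (ι h).symm j with i | k'
    · simp only [Sum.elim_inl]
      have := hdiagneg i
      apply div_nonneg (hCpos i k)
      linarith
    · simp only [Sum.elim_inr]
      split_ifs <;> norm_num
  -- row equations: for z in the kernel we can solve for the cL coordinates
  have detEq : ∀ z ∈ kerSub M, ∀ i : Fin ℓ,
      (-(M i (cL i) : ℝ)) * z (cL i) = ∑ k, (M i (cR k) : ℝ) * z (cR k) := by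
    intro z hz i
    have hrow := mem_kerSub.mp hz i
    rw [sum_split h (fun j => (M i j : ℝ) * z j)] at hrow
    have h1 : ∑ i', (M i (cL i') : ℝ) * z (cL i') = (M i (cL i) : ℝ) * z (cL i) := by
      apply Finset.sum_eq_single
      · intro b _ hb; rw [hoff i b hb]; ring
      · simp
    rw [h1] at hrow
    linarith [hrow]
  have hu_mem : ∀ k, u k ∈ kerSub M := by
    intro k
    rw [mem_kerSub]
    intro i
    rw [sum_split h (fun j => (M i j : ℝ) * u k j)]
    have h1 : ∑ i', (M i (cL i') : ℝ) * u k (cL i') = -(M i (cR k) : ℝ) := by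
      rw [Finset.sum_eq_single i]
      · rw [hu_cL, ← mul_div_assoc, div_eq_iff (neg_ne_zero.mpr (hdiagne i))]
        ring
      · intro b _ hb; rw [hoff i b hb]; ring
      · simp
    have h2 : ∑ k', (M i (cR k') : ℝ) * u k (cR k') = (M i (cR k) : ℝ) := by
      rw [Finset.sum_eq_single k]
      · rw [hu_cR]; simp
      · intro b _ hb; rw [hu_cR]; simp [hb]
      · simp
    rw [h1, h2]; ring
  -- normalization
  set s : Fin m → ℝ := fun k => ∑ j, u k j with hs
  have hs_pos : ∀ k, 0 < s k := by
    intro k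
    have h1 : (1:ℝ) ≤ s k := by
      have := Finset.single_le_sum (f := u k) (fun j _ => hu_nonneg k j)
        (Finset.mem_univ (cR k))
      rw [hu_cR, if_pos rfl] at this
      exact this
    linarith
  set V : Fin m → Fin n → ℝ := fun k => (s k)⁻¹ • u k with hV
  have hV_mem : ∀ k, V k ∈ kerSub M := fun k => Submodule.smul_mem _ _ (hu_mem k)
  have hV_simplex : ∀ k, V k ∈ stdSimplex ℝ (Fin n) := by
    intro k
    constructor
    · intro j
      exact mul_nonneg (inv_nonneg.mpr (hs_pos k).le) (hu_nonneg k j)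
    · rw [hV]
      simp only [Pi.smul_apply, smul_eq_mul]
      rw [← Finset.mul_sum]
      show (s k)⁻¹ * s k = 1
      exact inv_mul_cancel₀ (hs_pos k).ne'
  have hV_cR_pos : ∀ k, 0 < V k (cR k) := by
    intro k
    rw [hV]
    simp only [Pi.smul_apply, smul_eq_mul]
    rw [hu_cR, if_pos rfl, mul_one]
    exact inv_pos.mpr (hs_pos k)
  have hV_cR_zero : ∀ k k', k ≠ k' → V k (cR k') = 0 := by
    intro k k' hne
    rw [hV]
    simp only [Pi.smul_apply, smul_eq_mul]
    rw [hu_cR, if_neg (Ne.symm hne), mul_zero]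
  -- hull property
  have hhull : (kerSub M : Set (Fin n → ℝ)) ∩ stdSimplex ℝ (Fin n)
      ⊆ convexHull ℝ (Set.range V) := by
    rintro x ⟨hxK, hxS⟩
    set t : Fin m → ℝ := fun k => x (cR k) with ht
    set y : Fin n → ℝ := ∑ k, t k • u k with hy
    have hy_mem : y ∈ kerSub M :=
      Submodule.sum_mem _ fun k _ => Submodule.smul_mem _ _ (hu_mem k)
    have hy_cR : ∀ k', y (cR k') = t k' := by
      intro k'
      rw [hy, Finset.sum_apply]
      rw [Finset.sum_eq_single k']
      · simp [hu_cR]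
      · intro b _ hb
        simp only [Pi.smul_apply, smul_eq_mul]
        rw [hu_cR, if_neg (Ne.symm hb), mul_zero]
      · simp
    have hxy : x = y := by
      funext j
      rcases lt_or_ge ((j : Fin n) : ℕ) ℓ with hj | hj
      · have hjL : j = cL ⟨j, hj⟩ := by
          have hsy : (ι h).symm j = Sum.inl ⟨j, hj⟩ := symm_eq_inl h j hj
          have h2 := congrArg (ι h) hsy
          rw [Equiv.apply_symm_apply] at h2
          exact h2
        rw [hjL]
        have e1 := detEq x hxK ⟨j, hj⟩
        have e2 := detEq y hy_mem ⟨j, hj⟩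
        have hRHS : ∑ k, (M ⟨j, hj⟩ (cR k) : ℝ) * x (cR k)
            = ∑ k, (M ⟨j, hj⟩ (cR k) : ℝ) * y (cR k) := by
          apply Finset.sum_congr rfl
          intro k _
          rw [hy_cR, ht]
        rw [hRHS] at e1
        have hne := hdiagne ⟨j, hj⟩
        exact mul_left_cancel₀ (neg_ne_zero.mpr hne) (e1.trans e2.symm)
      · have hjR : j = cR ⟨(j:ℕ) - ℓ, by have := j.2; omega⟩ := by
          have hsy := symm_eq_inr h j hj
          have h2 := congrArg (ι h) hsy
          rw [Equiv.apply_symm_apply] at h2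
          exact h2
        rw [hjR, hy_cR, ht]
    -- weights
    set wgt : Fin m → ℝ := fun k => t k * s k with hwgt
    have hwgt_nonneg : ∀ k, 0 ≤ wgt k := by
      intro k
      exact mul_nonneg (hxS.1 (cR k)) (hs_pos k).le
    have hwsum : ∑ k, wgt k = 1 := by
      have h1 : ∑ j, x j = 1 := hxS.2
      rw [hxy, hy] at h1
      calc ∑ k, wgt k = ∑ k, ∑ j, t k * u k j := by
            refine Finset.sum_congr rfl fun k _ => ?_
            show t k * s k = _
            exact Finset.mul_sum _ _ _
        _ = ∑ j : Fin n, ∑ k, t k * u k j := Finset.sum_comm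
        _ = ∑ j : Fin n, (∑ k, t k • u k) j := by
            refine Finset.sum_congr rfl fun j _ => ?_
            rw [Finset.sum_apply]
            rfl
        _ = 1 := h1
    have hxcm : x = Finset.univ.centerMass wgt V := by
      rw [Finset.centerMass_eq_of_sum_1 _ _ hwsum]
      rw [hxy, hy]
      apply Finset.sum_congr rfl
      intro k _
      show t k • u k = (t k * s k) • ((s k)⁻¹ • u k)
      rw [smul_smul, mul_assoc, mul_inv_cancel₀ (hs_pos k).ne', mul_one]
    rw [hxcm]
    exact Finset.centerMass_mem_convexHull _ (fun k _ => hwgt_nonneg k)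
      (by rw [hwsum]; norm_num) (fun k _ => Set.mem_range_self k)
  exact core (kerSub M) V cR hV_mem hV_simplex hV_cR_pos hV_cR_zero hhull

end Rev

section Transfer
variable {ℓ m n : ℕ}

/-- Transfer the extreme point count along a coordinate permutation. -/
lemma transfer_count (A : Matrix (Fin ℓ) (Fin n) ℤ) (σ : Equiv.Perm (Fin n)) :
    (Set.extremePoints ℝ
      ({x : Fin n → ℝ | ∀ i, ∑ j, (A i (σ j) : ℝ) * x j = 0} ∩ stdSimplex ℝ (Fin n))).ncard
    = (Set.extremePoints ℝ
      ({x : Fin n → ℝ | ∀ i, ∑ j, (A i j : ℝ) * x j = 0} ∩ stdSimplex ℝ (Fin n))).ncard := by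
  set F : (Fin n → ℝ) ≃ₗ[ℝ] (Fin n → ℝ) := LinearEquiv.funCongrLeft ℝ ℝ (σ⁻¹ : Equiv.Perm (Fin n))
    with hF
  have hFapp : ∀ (x : Fin n → ℝ) (j : Fin n), F x j = x (σ⁻¹ j) := fun x j => rfl
  have hmem : ∀ x : Fin n → ℝ,
      x ∈ ({x : Fin n → ℝ | ∀ i, ∑ j, (A i (σ j) : ℝ) * x j = 0} ∩ stdSimplex ℝ (Fin n))
      ↔ F x ∈ ({x : Fin n → ℝ | ∀ i, ∑ j, (A i j : ℝ) * x j = 0} ∩ stdSimplex ℝ (Fin n)) := by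
    intro x
    constructor
    · rintro ⟨hk, hs⟩
      refine ⟨?_, ?_, ?_⟩
      · intro i
        have := hk i
        rw [← Equiv.sum_comp σ (fun j => (A i j : ℝ) * F x j)]
        refine Eq.trans (Finset.sum_congr rfl fun j _ => ?_) this
        rw [hFapp, Equiv.Perm.coe_inv, Equiv.symm_apply_apply]
      · intro j
        rw [hFapp]
        exact hs.1 _
      · have h2 : ∑ j, F x j = ∑ j, x j := Equiv.sum_comp (σ⁻¹ : Equiv.Perm (Fin n)) x
        rw [h2]
        exact hs.2
    · rintro ⟨hk, hs⟩
      refine ⟨?_, ?_, ?_⟩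
      · intro i
        have := hk i
        rw [← Equiv.sum_comp σ (fun j => (A i j : ℝ) * F x j)] at this
        refine Eq.trans (Finset.sum_congr rfl fun j _ => ?_).symm this
        rw [hFapp, Equiv.Perm.coe_inv, Equiv.symm_apply_apply]
      · intro j
        have := hs.1 (σ j)
        rw [hFapp, Equiv.Perm.coe_inv, Equiv.symm_apply_apply] at this
        exact this
      · have h2 : ∑ j, F x j = ∑ j, x j := Equiv.sum_comp (σ⁻¹ : Equiv.Perm (Fin n)) x
        have := hs.2
        rw [h2] at this
        exact this
  have himg : F '' ({x : Fin n → ℝ | ∀ i, ∑ j, (A i (σ j) : ℝ) * x j = 0}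
        ∩ stdSimplex ℝ (Fin n))
      = {x : Fin n → ℝ | ∀ i, ∑ j, (A i j : ℝ) * x j = 0} ∩ stdSimplex ℝ (Fin n) := by
    ext y
    constructor
    · rintro ⟨x, hx, rfl⟩
      exact (hmem x).1 hx
    · intro hy
      refine ⟨F.symm y, (hmem _).2 ?_, by simp⟩
      rw [LinearEquiv.apply_symm_apply]
      exact hy
  rw [← himg, ← image_extremePoints]
  exact (Set.ncard_image_of_injective _ F.injective).symm

end Transfer

section Forward
variable {ℓ m n : ℕ}

-- Step A: structure of P as hull of exactly m affinely independent points with support system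
lemma forward_vertices (h : ℓ + m = n) (hm : 1 ≤ m) (hℓ : 1 ≤ ℓ)
    (A : Matrix (Fin ℓ) (Fin n) ℤ)
    (hi : ∃ x ∈ ({x : Fin n → ℝ | ∀ i, ∑ j, (A i j : ℝ) * x j = 0} ∩ stdSimplex ℝ (Fin n)),
        ∀ j, 0 < x j)
    (hii : (A.map (Int.cast : ℤ → ℝ)).rank = ℓ)
    (hcard : (Set.extremePoints ℝ
        ({x : Fin n → ℝ | ∀ i, ∑ j, (A i j : ℝ) * x j = 0} ∩ stdSimplex ℝ (Fin n))).ncard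
        = m) :
    ∃ (w : Fin m → (Fin n → ℝ)) (J : Fin m → Fin n),
      (∀ k, w k ∈ kerSub A) ∧ (∀ k, w k ∈ stdSimplex ℝ (Fin n)) ∧
      Submodule.span ℝ (Set.range w) = kerSub A ∧
      (∀ k, 0 < w k (J k)) ∧ (∀ k k', k' ≠ k → w k' (J k) = 0) ∧
      Function.Injective J := by
  classical
  have hn0 : 0 < n := by rw [← h]; exact Nat.lt_of_lt_of_le hm (Nat.le_add_left m ℓ)
  haveI : Nonempty (Fin n) := ⟨⟨0, hn0⟩⟩
  set K := kerSub A with hK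
  set P : Set (Fin n → ℝ) := (K : Set (Fin n → ℝ)) ∩ stdSimplex ℝ (Fin n) with hPdef
  have hPeq : {x : Fin n → ℝ | ∀ i, ∑ j, (A i j : ℝ) * x j = 0} ∩ stdSimplex ℝ (Fin n) = P := by
    rw [hPdef, kerset_eq]
  rw [hPeq] at hcard hi
  have hPconv : Convex ℝ P := (Submodule.convex K).inter (convex_stdSimplex ℝ (Fin n))
  have hPclosed : IsClosed P := by
    rw [hPdef, ← kerset_eq]
    exact (isClosed_kerset A).inter (isCompact_stdSimplex ℝ (Fin n)).isClosed
  have hPcomp : IsCompact P :=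
    (isCompact_stdSimplex ℝ (Fin n)).of_isClosed_subset hPclosed Set.inter_subset_right
  set E := Set.extremePoints ℝ P with hE
  have hEP : E ⊆ P := extremePoints_subset
  have hEfin : E.Finite := by
    by_contra hinf
    have : E.Infinite := hinf
    rw [this.ncard] at hcard
    omega
  have hPhull : P = convexHull ℝ E := by
    have h1 := closure_convexHull_extremePoints hPcomp hPconv
    rw [(hEfin.isClosed_convexHull ℝ).closure_eq] at h1
    exact h1.symm
  haveI := hEfin.fintype
  have hcardE : Fintype.card E = m := by
    rw [← Nat.card_coe_set_eq, Nat.card_eq_fintype_card] at hcard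
    exact hcard
  set e : E ≃ Fin m := Fintype.equivFinOfCardEq hcardE with he
  set w : Fin m → (Fin n → ℝ) := fun k => ((e.symm k : E) : Fin n → ℝ) with hw
  have hwE : ∀ k, w k ∈ E := fun k => (e.symm k).2
  have hwrange : Set.range w = E := by
    apply Set.Subset.antisymm
    · rintro x ⟨k, rfl⟩; exact hwE k
    · intro y hy
      exact ⟨e ⟨y, hy⟩, by rw [hw]; simp⟩
  have hwP : ∀ k, w k ∈ P := fun k => hEP (hwE k)
  have hwK : ∀ k, w k ∈ K := fun k => (hwP k).1
  have hwS : ∀ k, w k ∈ stdSimplex ℝ (Fin n) := fun k => (hwP k).2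
  -- span
  have hPsub : P ⊆ (Submodule.span ℝ (Set.range w) : Set (Fin n → ℝ)) := by
    rw [hPhull, ← hwrange]
    exact convexHull_min Submodule.subset_span (Submodule.convex _)
  have hspan : Submodule.span ℝ (Set.range w) = K := by
    apply le_antisymm
    · rw [Submodule.span_le]
      rintro x ⟨k, rfl⟩
      exact hwK k
    · intro v hv
      obtain ⟨xs, ⟨hxK, hxS⟩, hxpos⟩ := hi
      set sv := ∑ j, v j with hsv
      set v0 : Fin n → ℝ := v - sv • xs with hv0
      have hv0K : v0 ∈ K := K.sub_mem hv (K.smul_mem _ hxK)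
      have hv0sum : ∑ j, v0 j = 0 := by
        rw [hv0]
        simp only [Pi.sub_apply, Pi.smul_apply, smul_eq_mul]
        rw [Finset.sum_sub_distrib, ← Finset.mul_sum, hxS.2, mul_one, ← hsv, sub_self]
      set c := Finset.univ.inf' Finset.univ_nonempty xs with hc
      have hcpos : 0 < c := by
        rw [hc, Finset.lt_inf'_iff]
        intro j _
        exact hxpos j
      set Fb := Finset.univ.sup' Finset.univ_nonempty (fun j => |v0 j|) with hFb
      have hFb0 : 0 ≤ Fb := by
        rw [hFb]
        exact le_trans (abs_nonneg _)
          (Finset.le_sup' (fun j => |v0 j|) (Finset.mem_univ (Classical.arbitrary (Fin n))))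
      set ε := c / (1 + Fb) with hε
      have hεpos : 0 < ε := div_pos hcpos (by linarith)
      have hbound : ∀ j, ε * |v0 j| < c := by
        intro j
        have h1 : |v0 j| ≤ Fb := by
          rw [hFb]; exact Finset.le_sup' (fun j => |v0 j|) (Finset.mem_univ j)
        have h2 : ε * |v0 j| ≤ ε * Fb := by
          apply mul_le_mul_of_nonneg_left h1 hεpos.le
        have h3 : ε * Fb < c := by
          rw [hε]
          rw [div_mul_eq_mul_div, div_lt_iff₀ (by linarith : (0:ℝ) < 1 + Fb)]
          nlinarith
        linarith
      have hpq : ∀ (sg : ℝ), |sg| = 1 → xs + (sg * ε) • v0 ∈ P := by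
        intro sg hsg
        refine ⟨K.add_mem hxK (K.smul_mem _ hv0K), fun j => ?_, ?_⟩
        · have h1 : |sg * ε * v0 j| < c := by
            rw [abs_mul, abs_mul, hsg, one_mul, abs_of_pos hεpos]
            exact hbound j
          have h2 : c ≤ xs j := Finset.inf'_le _ (Finset.mem_univ j)
          have := abs_lt.mp h1
          simp only [Pi.add_apply, Pi.smul_apply, smul_eq_mul]
          linarith
        · simp only [Pi.add_apply, Pi.smul_apply, smul_eq_mul]
          rw [Finset.sum_add_distrib, hxS.2, ← Finset.mul_sum, hv0sum, mul_zero, add_zero]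
      have hp := hpq 1 (by norm_num)
      have hq := hpq (-1) (by norm_num)
      rw [one_mul] at hp
      have hv0span : v0 ∈ Submodule.span ℝ (Set.range w) := by
        have h1 := Submodule.sub_mem _ (hPsub hp) (hPsub hq)
        have h2 : (xs + ε • v0) - (xs + ((-1 : ℝ) * ε) • v0) = (2 * ε) • v0 := by
          funext j
          simp only [Pi.sub_apply, Pi.add_apply, Pi.smul_apply, smul_eq_mul]
          ring
        rw [h2] at h1
        have h3 := Submodule.smul_mem _ (2 * ε)⁻¹ h1
        rw [smul_smul, inv_mul_cancel₀ (by positivity), one_smul] at h3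
        exact h3
      have hxspan : xs ∈ Submodule.span ℝ (Set.range w) := hPsub ⟨hxK, hxS⟩
      have : v = v0 + sv • xs := by
        funext j
        simp only [hv0, Pi.add_apply, Pi.sub_apply, Pi.smul_apply, smul_eq_mul]
        ring
      rw [this]
      exact Submodule.add_mem _ hv0span (Submodule.smul_mem _ _ hxspan)
  have hfinK : Module.finrank ℝ K = m := by
    rw [hK]
    have := finrank_kerSub A hii
    omega
  have hLI : LinearIndependent ℝ w := by
    rw [linearIndependent_iff_card_eq_finrank_span]
    rw [Set.finrank, hspan, hfinK, Fintype.card_fin]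
  have hrep : ∀ x ∈ P, ∃ t : Fin m → ℝ, (∀ k, 0 ≤ t k) ∧ ∑ k, t k = 1 ∧
      x = ∑ k, t k • w k := by
    intro x hx
    rw [hPhull, ← hwrange] at hx
    exact exists_weights hx
  -- J choice
  have hJex : ∀ k, ∃ j, 0 < w k j ∧ ∀ k', k' ≠ k → w k' j = 0 := by
    intro k
    by_contra hcon
    push_neg at hcon
    have H : ∀ j, (∀ k', k' ≠ k → w k' j = 0) → w k j = 0 := by
      intro j hz
      by_contra hne
      have hpos : 0 < w k j := lt_of_le_of_ne ((hwS k).1 j) (Ne.symm hne)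
      obtain ⟨k', hk', hne'⟩ := hcon j hpos
      exact hne' (hz k' hk')
    by_cases hall : ∀ k' : Fin m, k' = k
    · have hzero : ∀ j, w k j = 0 := fun j =>
        H j (fun k' hk' => absurd (hall k') hk')
      have h1 := (hwS k).2
      rw [Finset.sum_congr rfl (fun j _ => hzero j)] at h1
      simp at h1
    · push_neg at hall
      obtain ⟨k0, hk0⟩ := hall
      set T := Finset.univ.erase k with hT
      have hTne : T.Nonempty := ⟨k0, Finset.mem_erase.mpr ⟨hk0, Finset.mem_univ _⟩⟩
      have hTcard : 0 < (T.card : ℝ) := by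
        rw [Nat.cast_pos, Finset.card_pos]
        exact hTne
      set z : Fin n → ℝ := ((T.card : ℝ))⁻¹ • ∑ k' ∈ T, w k' with hz
      have hzK : z ∈ K := K.smul_mem _ (K.sum_mem fun k' _ => hwK k')
      have hzapp : ∀ j, z j = (T.card : ℝ)⁻¹ * ∑ k' ∈ T, w k' j := by
        intro j
        rw [hz]
        simp [Finset.sum_apply]
      have hznn : ∀ j, 0 ≤ z j := by
        intro j
        rw [hzapp]
        exact mul_nonneg (inv_nonneg.mpr (Nat.cast_nonneg _)) (Finset.sum_nonneg fun k' _ => (hwS k').1 j)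
      have hzsum : ∑ j, z j = 1 := by
        rw [Finset.sum_congr rfl (fun j _ => hzapp j)]
        rw [← Finset.mul_sum, Finset.sum_comm]
        rw [Finset.sum_congr rfl (fun k' _ => (hwS k').2)]
        simp only [Finset.sum_const, nsmul_eq_mul, mul_one]
        exact inv_mul_cancel₀ (ne_of_gt hTcard)
      have hz0 : ∀ j, z j = 0 → w k j = 0 := by
        intro j hj
        apply H j
        intro k' hk'
        have hk'T : k' ∈ T := Finset.mem_erase.mpr ⟨hk', Finset.mem_univ _⟩
        have hsum0 : ∑ k'' ∈ T, w k'' j = 0 := by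
          rw [hzapp] at hj
          rcases mul_eq_zero.mp hj with h' | h'
          · exact absurd h' (inv_ne_zero (ne_of_gt hTcard))
          · exact h'
        exact (Finset.sum_eq_zero_iff_of_nonneg (fun k'' _ => (hwS k'').1 j)).mp hsum0 k' hk'T
      set Tpos := Finset.univ.filter (fun j => 0 < z j) with hTpos
      have hTposne : Tpos.Nonempty := by
        by_contra hemp
        rw [Finset.not_nonempty_iff_eq_empty] at hemp
        have hzero : ∑ j, z j = 0 := by
          apply Finset.sum_eq_zero
          intro j _
          by_contra hne
          have h1 : 0 < z j := lt_of_le_of_ne (hznn j) (Ne.symm hne)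
          have h2 : j ∈ Tpos := by rw [hTpos]; simp [h1]
          rw [hemp] at h2
          simp at h2
        rw [hzsum] at hzero
        norm_num at hzero
      set tmin := Tpos.inf' hTposne z with htmin
      have htpos : 0 < tmin := by
        rw [htmin, Finset.lt_inf'_iff]
        intro j hj
        rw [hTpos] at hj
        exact (Finset.mem_filter.mp hj).2
      set y : Fin n → ℝ := (1 + tmin) • z - tmin • w k with hy
      have hyapp : ∀ j, y j = (1 + tmin) * z j - tmin * w k j := by
        intro j
        simp [hy]
      have hyK : y ∈ K := K.sub_mem (K.smul_mem _ hzK) (K.smul_mem _ (hwK k))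
      have hynn : ∀ j, 0 ≤ y j := by
        intro j
        rcases eq_or_lt_of_le (hznn j) with hz0j | hzpos
        · have hwk0 : w k j = 0 := hz0 j hz0j.symm
          rw [hyapp, hwk0, ← hz0j]
          norm_num
        · have hjT : j ∈ Tpos := by rw [hTpos]; simp [hzpos]
          have h1 : tmin ≤ z j := by rw [htmin]; exact Finset.inf'_le _ hjT
          have h2 : w k j ≤ 1 := (mem_Icc_of_mem_stdSimplex (hwS k) j).2
          rw [hyapp]
          nlinarith
      have hysum : ∑ j, y j = 1 := by
        rw [Finset.sum_congr rfl fun j _ => hyapp j]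
        rw [Finset.sum_sub_distrib, ← Finset.mul_sum, ← Finset.mul_sum, hzsum, (hwS k).2]
        ring
      have hyP : y ∈ P := ⟨hyK, fun j => hynn j, hysum⟩
      obtain ⟨st, hst0, hst1, hstrep⟩ := hrep y hyP
      set a : Fin m → ℝ := fun k' => if k' = k then -tmin else (1 + tmin) * (T.card : ℝ)⁻¹
        with ha
      have hyrep2 : y = ∑ k', a k' • w k' := by
        funext j
        have hLHS : y j = (1 + tmin) * ((T.card : ℝ)⁻¹ * ∑ k' ∈ T, w k' j)
            - tmin * w k j := by
          rw [hyapp, hzapp]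
        have hRHS : (∑ k', a k' • w k') j = a k * w k j + ∑ k' ∈ T, a k' * w k' j := by
          rw [Finset.sum_apply]
          simp only [Pi.smul_apply, smul_eq_mul]
          rw [hT]
          exact (Finset.add_sum_erase _ (fun k' => a k' * w k' j) (Finset.mem_univ k)).symm
        rw [hLHS, hRHS]
        have h2 : ∑ k' ∈ T, a k' * w k' j
            = ∑ k' ∈ T, ((1 + tmin) * (T.card : ℝ)⁻¹) * w k' j := by
          refine Finset.sum_congr rfl fun k' hk' => ?_
          have hne : k' ≠ k := by
            rw [hT] at hk'
            exact (Finset.mem_erase.mp hk').1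
          simp only [ha]
          rw [if_neg hne]
        rw [h2]
        have h3 : a k = -tmin := by simp [ha]
        rw [h3, ← Finset.mul_sum]
        ring
      have hcoef : ∀ k', st k' = a k' := by
        have h0 : ∑ k', (st k' - a k') • w k' = 0 := by
          rw [Finset.sum_congr rfl (fun k' _ => sub_smul (st k') (a k') (w k'))]
          rw [Finset.sum_sub_distrib, ← hstrep, ← hyrep2, sub_self]
        intro k'
        have h4 := Fintype.linearIndependent_iff.mp hLI _ h0 k'
        have : st k' - a k' = 0 := h4
        linarith
      have h5 : st k = -tmin := by
        rw [hcoef k]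
        simp [ha]
      have h6 := hst0 k
      rw [h5] at h6
      linarith
  choose J hJpos hJzero using hJex
  have hJinj : Function.Injective J := by
    intro k k' hkk
    by_contra hne
    have h2 := hJpos k
    rw [hkk] at h2
    rw [hJzero k' k hne] at h2
    exact lt_irrefl 0 h2
  refine ⟨w, J, fun k => hwK k, hwS, hspan.trans hK, hJpos, hJzero, hJinj⟩

lemma forward_matrix (h : ℓ + m = n) (A : Matrix (Fin ℓ) (Fin n) ℤ)
    (w : Fin m → (Fin n → ℝ)) (J : Fin m → Fin n)
    (hwK : ∀ k, w k ∈ kerSub A) (hwnn : ∀ k j, 0 ≤ w k j)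
    (hspan : Submodule.span ℝ (Set.range w) = kerSub A)
    (hJpos : ∀ k, 0 < w k (J k)) (hJzero : ∀ k k', k' ≠ k → w k' (J k) = 0)
    (hJinj : Function.Injective J) :
    ∃ (σ : Equiv.Perm (Fin n)) (M : Matrix (Fin ℓ) (Fin n) ℤ),
      ({x : Fin n → ℝ | ∀ i, ∑ j, (M i j : ℝ) * x j = 0}
        = {x : Fin n → ℝ | ∀ i, ∑ j, (A i (σ j) : ℝ) * x j = 0}) ∧
      (∀ (i : Fin ℓ) (j : Fin n), (j : ℕ) < ℓ →
        (((j : ℕ) = (i : ℕ) → M i j < 0) ∧ ((j : ℕ) ≠ (i : ℕ) → M i j = 0))) ∧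
      (∀ (i : Fin ℓ) (j : Fin n), ℓ ≤ (j : ℕ) → 0 ≤ M i j) := by
  classical
  -- the augmented square matrix
  set Ahat : Matrix (Fin n) (Fin n) ℤ := fun t j =>
    Sum.elim (fun i => A i j) (fun k => if j = J k then 1 else 0) ((ι h).symm t) with hAhat
  have hrow_inl : ∀ (i : Fin ℓ) (j : Fin n), Ahat (ι h (Sum.inl i)) j = A i j := by
    intro i j; rw [hAhat]; simp
  have hrow_inr : ∀ (k : Fin m) (j : Fin n),
      Ahat (ι h (Sum.inr k)) j = if j = J k then 1 else 0 := by
    intro k j; rw [hAhat]; simp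
  -- determinant is nonzero
  have hdetR : ((Ahat.map (Int.cast : ℤ → ℝ)).det : ℝ) ≠ 0 := by
    intro h0
    obtain ⟨v, hvne, hv0⟩ := Matrix.exists_mulVec_eq_zero_iff.mpr h0
    have hvK : v ∈ kerSub A := by
      rw [mem_kerSub]
      intro i
      have h1 : ∑ j, (Ahat.map (Int.cast : ℤ → ℝ)) (ι h (Sum.inl i)) j * v j = 0 := by
        have := congrFun hv0 (ι h (Sum.inl i))
        simpa [Matrix.mulVec, dotProduct] using this
      rw [← h1]
      refine Finset.sum_congr rfl fun j _ => ?_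
      rw [Matrix.map_apply, hrow_inl]
    have hvJ : ∀ k, v (J k) = 0 := by
      intro k
      have h1 : ∑ j, (Ahat.map (Int.cast : ℤ → ℝ)) (ι h (Sum.inr k)) j * v j = 0 := by
        have := congrFun hv0 (ι h (Sum.inr k))
        simpa [Matrix.mulVec, dotProduct] using this
      rw [Finset.sum_eq_single (J k)] at h1
      · rw [Matrix.map_apply, hrow_inr, if_pos rfl] at h1
        simpa using h1
      · intro j _ hj
        rw [Matrix.map_apply, hrow_inr, if_neg hj]
        simp
      · simp
    rw [← hspan] at hvK
    obtain ⟨c, hc⟩ := (Submodule.mem_span_range_iff_exists_fun ℝ).mp hvK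
    have hc0 : ∀ k, c k = 0 := by
      intro k
      have h1 : v (J k) = c k * w k (J k) := by
        rw [← hc, Finset.sum_apply, Finset.sum_eq_single k]
        · simp
        · intro b _ hb
          simp only [Pi.smul_apply, smul_eq_mul]
          rw [hJzero k b hb, mul_zero]
        · simp
      rw [hvJ k] at h1
      rcases mul_eq_zero.mp h1.symm with h' | h'
      · exact h'
      · exact absurd h' (hJpos k).ne'
    apply hvne
    rw [← hc]
    funext j
    rw [Finset.sum_apply]
    apply Finset.sum_eq_zero
    intro k _
    simp [hc0 k]
  set dA : ℤ := Ahat.det with hdA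
  have hcast_det : ((dA : ℤ) : ℝ) = (Ahat.map (Int.cast : ℤ → ℝ)).det := by
    rw [hdA]
    rw [show Ahat.map (Int.cast : ℤ → ℝ) = (Int.castRingHom ℝ).mapMatrix Ahat from rfl]
    exact RingHom.map_det (Int.castRingHom ℝ) Ahat
  have hdAR : ((dA : ℤ) : ℝ) ≠ 0 := by rw [hcast_det]; exact hdetR
  have hdAne : dA ≠ 0 := fun h' => hdAR (by rw [h']; simp)
  -- integer kernel vectors
  set vI : Fin m → Fin n → ℤ := fun k j => Ahat.adjugate j (ι h (Sum.inr k)) with hvI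
  have hmulrel : ∀ (t : Fin n) (k : Fin m),
      ∑ j, Ahat t j * vI k j = dA * (if t = ι h (Sum.inr k) then 1 else 0) := by
    intro t k
    have h1 : (Ahat * Ahat.adjugate) t (ι h (Sum.inr k)) = (dA • (1 : Matrix (Fin n) (Fin n) ℤ)) t (ι h (Sum.inr k)) := by
      rw [Matrix.mul_adjugate]
    rw [Matrix.mul_apply] at h1
    rw [show (∑ j, Ahat t j * vI k j) = ∑ j, Ahat t j * Ahat.adjugate j (ι h (Sum.inr k)) from rfl]
    rw [h1]
    rw [Matrix.smul_apply, Matrix.one_apply]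
    simp
  set vR : Fin m → Fin n → ℝ := fun k j => ((vI k j : ℤ) : ℝ) with hvR
  have hvKer : ∀ k, vR k ∈ kerSub A := by
    intro k
    rw [mem_kerSub]
    intro i
    have h1 := hmulrel (ι h (Sum.inl i)) k
    have h2 : (ι h (Sum.inl i)) ≠ (ι h (Sum.inr k)) := by
      intro h'
      exact Sum.inl_ne_inr ((ι h).injective h')
    rw [if_neg h2, mul_zero] at h1
    have h3 : ((∑ j, Ahat (ι h (Sum.inl i)) j * vI k j : ℤ) : ℝ) = 0 := by rw [h1]; simp
    push_cast at h3
    rw [← h3]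
    refine Finset.sum_congr rfl fun j _ => ?_
    rw [hrow_inl]
  have hvJ : ∀ k k', vR k (J k') = if k' = k then ((dA : ℤ) : ℝ) else 0 := by
    intro k k'
    have h1 := hmulrel (ι h (Sum.inr k')) k
    have h2 : ∑ j, Ahat (ι h (Sum.inr k')) j * vI k j = vI k (J k') := by
      rw [Finset.sum_eq_single (J k')]
      · rw [hrow_inr, if_pos rfl, one_mul]
      · intro j _ hj
        rw [hrow_inr, if_neg hj, zero_mul]
      · simp
    rw [h2] at h1
    have h3 : ((ι h (Sum.inr k')) = ι h (Sum.inr k)) ↔ k' = k := by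
      rw [(ι h).apply_eq_iff_eq]
      exact ⟨fun h' => Sum.inr_injective h', fun h' => h' ▸ rfl⟩
    rw [hvR]
    simp only []
    rw [h1]
    by_cases hkk : k' = k
    · rw [if_pos ((h3).mpr hkk), if_pos hkk]
      push_cast
      ring
    · rw [if_neg (fun h' => hkk (h3.mp h')), if_neg hkk]
      push_cast
      ring
  -- proportionality with w
  have hkeyW : ∀ k q, w k (J k) * vR k q = ((dA : ℤ) : ℝ) * w k q := by
    intro k q
    have hvk := hvKer k
    rw [← hspan] at hvk
    obtain ⟨c, hc⟩ := (Submodule.mem_span_range_iff_exists_fun ℝ).mp hvk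
    have hck : ∀ k'', k'' ≠ k → c k'' = 0 := by
      intro k'' hkk
      have h1 : vR k (J k'') = c k'' * w k'' (J k'') := by
        rw [← hc, Finset.sum_apply, Finset.sum_eq_single k'']
        · simp
        · intro b _ hb
          simp only [Pi.smul_apply, smul_eq_mul]
          rw [hJzero k'' b hb, mul_zero]
        · simp
      rw [hvJ k k'', if_neg hkk] at h1
      rcases mul_eq_zero.mp h1.symm with h' | h'
      · exact h'
      · exact absurd h' (hJpos k'').ne'
    have hckk : c k * w k (J k) = ((dA : ℤ) : ℝ) := by
      have h1 : vR k (J k) = c k * w k (J k) := by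
        rw [← hc, Finset.sum_apply, Finset.sum_eq_single k]
        · simp
        · intro b _ hb
          simp only [Pi.smul_apply, smul_eq_mul]
          rw [hJzero k b hb, mul_zero]
        · simp
      rw [hvJ k k, if_pos rfl] at h1
      exact h1.symm
    have hq : vR k q = c k * w k q := by
      rw [← hc, Finset.sum_apply, Finset.sum_eq_single k]
      · simp
      · intro b _ hb
        rw [hck b hb]
        simp
      · simp
    rw [hq, ← hckk]
    ring
  -- the key linear relation on the kernel
  have hkey : ∀ y ∈ kerSub A, ∀ q, ((dA : ℤ) : ℝ) * y q = ∑ k, vR k q * y (J k) := by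
    intro y hy q
    rw [← hspan] at hy
    obtain ⟨c, hc⟩ := (Submodule.mem_span_range_iff_exists_fun ℝ).mp hy
    have hyJ : ∀ k, y (J k) = c k * w k (J k) := by
      intro k
      rw [← hc, Finset.sum_apply, Finset.sum_eq_single k]
      · simp
      · intro b _ hb
        simp only [Pi.smul_apply, smul_eq_mul]
        rw [hJzero k b hb, mul_zero]
      · simp
    have hyq : y q = ∑ k, c k * w k q := by
      rw [← hc, Finset.sum_apply]
      refine Finset.sum_congr rfl fun k _ => ?_
      simp
    rw [hyq, Finset.mul_sum]
    refine Finset.sum_congr rfl fun k _ => ?_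
    rw [hyJ k]
    linear_combination (-(c k)) * hkeyW k q
  -- complement of the image of J
  set Jimg : Finset (Fin n) := Finset.univ.image J with hJimg
  have hJimgcard : Jimg.card = m := by
    rw [hJimg, Finset.card_image_of_injective _ hJinj, Finset.card_univ, Fintype.card_fin]
  set Jc : Finset (Fin n) := Jimgᶜ with hJc
  have hJccard : Fintype.card {x // x ∈ Jc} = ℓ := by
    rw [Fintype.card_coe, hJc, Finset.card_compl, hJimgcard, Fintype.card_fin]
    omega
  set eC : Fin ℓ ≃ {x // x ∈ Jc} := (Fintype.equivFinOfCardEq hJccard).symm with heC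
  set p : Fin ℓ → Fin n := fun i => (eC i : Fin n) with hp
  have hpJ : ∀ i k, p i ≠ J k := by
    intro i k h'
    have h1 : (p i) ∈ Jc := (eC i).2
    rw [hJc, Finset.mem_compl] at h1
    exact h1 (h' ▸ Finset.mem_image_of_mem J (Finset.mem_univ k))
  have hpinj : Function.Injective p := by
    intro i i' h'
    exact eC.injective (Subtype.ext h')
  -- the permutation
  have hτinj : Function.Injective (Sum.elim p J) := by
    intro a b hab
    cases a with
    | inl i =>
      cases b with
      | inl i' =>
        simp only [Sum.elim_inl] at hab
        rw [hpinj hab]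
      | inr k' =>
        simp only [Sum.elim_inl, Sum.elim_inr] at hab
        exact absurd hab (hpJ i k')
    | inr k =>
      cases b with
      | inl i' =>
        simp only [Sum.elim_inl, Sum.elim_inr] at hab
        exact absurd hab.symm (hpJ i' k)
      | inr k' =>
        simp only [Sum.elim_inr] at hab
        rw [hJinj hab]
  set σf : Fin n → Fin n := fun t => Sum.elim p J ((ι h).symm t) with hσf
  have hσfinj : Function.Injective σf := hτinj.comp (ι h).symm.injective
  set σ : Equiv.Perm (Fin n) :=
    Equiv.ofBijective σf (Finite.injective_iff_bijective.mp hσfinj) with hσ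
  have hσapp : ∀ t, σ t = Sum.elim p J ((ι h).symm t) := fun t => rfl
  have hσL : ∀ i, σ (ι h (Sum.inl i)) = p i := by
    intro i; rw [hσapp, Equiv.symm_apply_apply]; rfl
  have hσR : ∀ k, σ (ι h (Sum.inr k)) = J k := by
    intro k; rw [hσapp, Equiv.symm_apply_apply]; rfl
  -- sign
  set ε : ℤ := if 0 < dA then 1 else -1 with hε
  have hεdA : ε * dA = |dA| := by
    rw [hε]
    rcases lt_trichotomy dA 0 with h' | h' | h'
    · rw [if_neg (by omega), abs_of_neg h']; ring
    · exact absurd h' hdAne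
    · rw [if_pos h', abs_of_pos h']; ring
  -- the matrix M
  set M : Matrix (Fin ℓ) (Fin n) ℤ := fun i j =>
    Sum.elim (fun i' => if i' = i then -|dA| else 0) (fun k => ε * vI k (p i))
      ((ι h).symm j) with hM
  have hMcolL : ∀ (i i' : Fin ℓ), M i (ι h (Sum.inl i')) = if i' = i then -|dA| else 0 := by
    intro i i'; rw [hM]; simp
  have hMcolR : ∀ (i : Fin ℓ) (k : Fin m), M i (ι h (Sum.inr k)) = ε * vI k (p i) := by
    intro i k; rw [hM]; simp
  -- sign facts over ℝ
  have habs_pos : (0 : ℝ) < ((|dA| : ℤ) : ℝ) := by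
    have : (0 : ℤ) < |dA| := abs_pos.mpr hdAne
    exact_mod_cast this
  have hεvR : ∀ k q, w k (J k) * ((ε : ℤ) : ℝ) * vR k q = ((|dA| : ℤ) : ℝ) * w k q := by
    intro k q
    have h1 := hkeyW k q
    have h2 : ((ε : ℤ) : ℝ) * (((dA : ℤ) : ℝ) * w k q) = ((|dA| : ℤ) : ℝ) * w k q := by
      rw [← mul_assoc]
      congr 1
      rw [show ((ε : ℤ) : ℝ) * ((dA : ℤ) : ℝ) = ((ε * dA : ℤ) : ℝ) by push_cast; ring, hεdA]
    calc w k (J k) * ((ε : ℤ) : ℝ) * vR k q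
        = ((ε : ℤ) : ℝ) * (w k (J k) * vR k q) := by ring
      _ = ((ε : ℤ) : ℝ) * (((dA : ℤ) : ℝ) * w k q) := by rw [h1]
      _ = ((|dA| : ℤ) : ℝ) * w k q := h2
  refine ⟨σ, M, ?_, ?_, ?_⟩
  · -- kernel set equality
    ext x
    simp only [Set.mem_setOf_eq]
    set y : Fin n → ℝ := fun q => x (σ.symm q) with hy
    have hxy : ∀ t, x t = y (σ t) := by
      intro t; rw [hy]; simp only [Equiv.symm_apply_apply]
    have hMrow : ∀ i, ∑ j, (M i j : ℝ) * x j
        = -((|dA| : ℤ) : ℝ) * y (p i) + ∑ k, ((ε : ℤ) : ℝ) * vR k (p i) * y (J k) := by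
      intro i
      rw [sum_split h (fun j => (M i j : ℝ) * x j)]
      congr 1
      · rw [Finset.sum_eq_single i]
        · rw [hMcolL, if_pos rfl, hxy (ι h (Sum.inl i)), hσL]
          push_cast
          ring
        · intro b _ hb
          rw [hMcolL, if_neg hb]
          simp
        · simp
      · refine Finset.sum_congr rfl fun k _ => ?_
        rw [hMcolR, hxy (ι h (Sum.inr k)), hσR]
        push_cast
        ring
    have hεd : ((ε : ℤ) : ℝ) * ((dA : ℤ) : ℝ) = ((|dA| : ℤ) : ℝ) := by
      rw [show ((ε : ℤ) : ℝ) * ((dA : ℤ) : ℝ) = ((ε * dA : ℤ) : ℝ) by push_cast; ring, hεdA]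
    have hArow : (∀ i, ∑ j, (A i (σ j) : ℝ) * x j = 0) ↔ y ∈ kerSub A := by
      rw [mem_kerSub]
      apply forall_congr'
      intro i
      have hsame : ∑ j, (A i (σ j) : ℝ) * x j = ∑ q, (A i q : ℝ) * y q := by
        rw [← Equiv.sum_comp σ (fun q => (A i q : ℝ) * y q)]
        exact Finset.sum_congr rfl fun j _ => by rw [hxy j]
      rw [hsame]
    constructor
    · intro hx
      rw [hArow]
      set z : Fin n → ℝ := ∑ k, (y (J k) / w k (J k)) • w k with hz
      have hzK : z ∈ kerSub A :=
        Submodule.sum_mem _ fun k _ => Submodule.smul_mem _ _ (hwK k)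
      have hzJ : ∀ k', z (J k') = y (J k') := by
        intro k'
        rw [hz, Finset.sum_apply, Finset.sum_eq_single k']
        · simp only [Pi.smul_apply, smul_eq_mul]
          rw [div_mul_cancel₀]
          exact (hJpos k').ne'
        · intro b _ hb
          simp only [Pi.smul_apply, smul_eq_mul]
          rw [hJzero k' b hb, mul_zero]
        · simp
      have hyz : y = z := by
        funext q
        obtain ⟨t, rfl⟩ : ∃ t, σ t = q := ⟨σ.symm q, by simp⟩
        rcases h1 : (ι h).symm t with i | k
        · have ht : t = ι h (Sum.inl i) := by
            rw [← h1, Equiv.apply_symm_apply]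
          rw [ht, hσL]
          have hxrow := hx i
          rw [hMrow] at hxrow
          have hkz := hkey z hzK (p i)
          have hsum : ∑ k, ((ε : ℤ) : ℝ) * vR k (p i) * y (J k)
              = ((ε : ℤ) : ℝ) * (((dA : ℤ) : ℝ) * z (p i)) := by
            rw [hkz, Finset.mul_sum]
            refine Finset.sum_congr rfl fun k _ => ?_
            rw [hzJ]
            ring
          rw [hsum] at hxrow
          have hyzq : ((|dA| : ℤ) : ℝ) * y (p i) = ((|dA| : ℤ) : ℝ) * z (p i) := by
            linear_combination (-1 : ℝ) * hxrow + z (p i) * hεd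
          exact mul_left_cancel₀ habs_pos.ne' hyzq
        · have ht : t = ι h (Sum.inr k) := by
            rw [← h1, Equiv.apply_symm_apply]
          rw [ht, hσR]
          exact (hzJ k).symm
      rw [hyz]
      exact hzK
    · intro hx
      have hyK : y ∈ kerSub A := hArow.mp hx
      intro i
      rw [hMrow]
      have hkz := hkey y hyK (p i)
      have hsum : ∑ k, ((ε : ℤ) : ℝ) * vR k (p i) * y (J k)
          = ((ε : ℤ) : ℝ) * (((dA : ℤ) : ℝ) * y (p i)) := by
        rw [hkz, Finset.mul_sum]
        refine Finset.sum_congr rfl fun k _ => ?_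
        ring
      rw [hsum]
      linear_combination y (p i) * hεd
  · -- diagonal block
    intro i j hj
    have hsymm := symm_eq_inl h j hj
    constructor
    · intro hji
      have hji' : (⟨(j : ℕ), hj⟩ : Fin ℓ) = i := Fin.ext hji
      have : M i j = -|dA| := by
        rw [hM]
        simp only [hsymm, Sum.elim_inl]
        rw [if_pos hji']
      rw [this]
      have : (0 : ℤ) < |dA| := abs_pos.mpr hdAne
      omega
    · intro hji
      have hji' : (⟨(j : ℕ), hj⟩ : Fin ℓ) ≠ i := fun h' => hji (by rw [← h'])
      rw [hM]
      simp only [hsymm, Sum.elim_inl]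
      rw [if_neg hji']
  · -- nonnegative block
    intro i j hj
    have hsymm := symm_eq_inr h j hj
    set k : Fin m := ⟨(j : ℕ) - ℓ, by have := j.2; omega⟩ with hk
    have hMj : M i j = ε * vI k (p i) := by
      rw [hM]
      simp only [hsymm, Sum.elim_inr]
    rw [hMj]
    have hR : (0 : ℝ) ≤ ((ε : ℤ) : ℝ) * vR k (p i) := by
      have h1 := hεvR k (p i)
      have h2 : 0 ≤ ((|dA| : ℤ) : ℝ) * w k (p i) :=
        mul_nonneg habs_pos.le (hwnn k (p i))
      nlinarith [hJpos k, h1, h2]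
    have : (0 : ℝ) ≤ ((ε * vI k (p i) : ℤ) : ℝ) := by
      push_cast
      push_cast at hR
      exact hR
    exact_mod_cast this

end Forward

end Stmt1Aux


/-- Under hypotheses (i), (ii), (iii), `P_A` has exactly `n - ℓ` extreme points
iff, after a column permutation `σ`, the real kernel of `A` agrees with that of an integer
matrix `M` in block form `[D | C]` with `D` diagonal with negative diagonal entries and `C`
entrywise nonnegative. -/
theorem stmt_1 (ℓ n : ℕ) (hℓ : 1 ≤ ℓ) (hn : ℓ ≤ n)
    (A : Matrix (Fin ℓ) (Fin n) ℤ)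
    (hi : ∃ x ∈ ({x : Fin n → ℝ | ∀ i, ∑ j, (A i j : ℝ) * x j = 0} ∩ stdSimplex ℝ (Fin n)),
        ∀ j, 0 < x j)
    (hii : (A.map (Int.cast : ℤ → ℝ)).rank = ℓ)
    (hiii : ∀ j, ∃ i, A i j ≠ 0) :
    (Set.extremePoints ℝ
        ({x : Fin n → ℝ | ∀ i, ∑ j, (A i j : ℝ) * x j = 0} ∩ stdSimplex ℝ (Fin n))).ncard
      = n - ℓ ↔
    ∃ (σ : Equiv.Perm (Fin n)) (M : Matrix (Fin ℓ) (Fin n) ℤ),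
      ({x : Fin n → ℝ | ∀ i, ∑ j, (M i j : ℝ) * x j = 0}
        = {x : Fin n → ℝ | ∀ i, ∑ j, (A i (σ j) : ℝ) * x j = 0}) ∧
      (∀ (i : Fin ℓ) (j : Fin n), (j : ℕ) < ℓ →
        (((j : ℕ) = (i : ℕ) → M i j < 0) ∧ ((j : ℕ) ≠ (i : ℕ) → M i j = 0))) ∧
      (∀ (i : Fin ℓ) (j : Fin n), ℓ ≤ (j : ℕ) → 0 ≤ M i j) := by
  have hln : ℓ < n := Stmt1Aux.l_lt_n A hℓ hn hi hii
  have h : ℓ + (n - ℓ) = n := Nat.add_sub_cancel' hn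
  constructor
  · intro hcard
    have hm : 1 ≤ n - ℓ := Nat.le_sub_of_add_le (by rw [Nat.add_comm]; exact hln)
    obtain ⟨w, J, hwK, hwS, hspan, hJpos, hJzero, hJinj⟩ :=
      Stmt1Aux.forward_vertices h hm hℓ A hi hii hcard
    exact Stmt1Aux.forward_matrix h A w J hwK (fun k j => (hwS k).1 j) hspan hJpos hJzero hJinj
  · rintro ⟨σ, M, hker, hD, hC⟩
    have h1 := Stmt1Aux.rev_count h M hD hC
    rw [← Stmt1Aux.kerset_eq] at h1
    rw [hker] at h1
    rw [Stmt1Aux.transfer_count A σ] at h1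
    exact h1
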